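/- For each β>0, the t-norm T(x,y)=(max{x^β+y^β−1,0})^{1/β} for (x,y)∈(0,1]² and T(x,y)=0 otherwise, is general pseudo-homogeneous for F(x,y)=(max{x^β+(xy)^β−1,0})^{1/β} for (x,y)∈(0,1]² and F(x,y)=0 otherwise; i.e., T(λx,λy)=F(λ,T(x,y)) for all x,y,λ∈[0,1]. -/
import Mathlib


open Set Filter Topology

def IsTnorm (T : ℝ → ℝ → ℝ) : Prop :=
  (∀ x ∈ Set.Icc (0:ℝ) 1, ∀ y ∈ Set.Icc (0:ℝ) 1, T x y ∈ Set.Icc (0:ℝ) 1) ∧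
  (∀ x ∈ Set.Icc (0:ℝ) 1, ∀ y ∈ Set.Icc (0:ℝ) 1, T x y = T y x) ∧
  (∀ x ∈ Set.Icc (0:ℝ) 1, ∀ y ∈ Set.Icc (0:ℝ) 1, ∀ z ∈ Set.Icc (0:ℝ) 1,
      T x (T y z) = T (T x y) z) ∧
  (∀ x ∈ Set.Icc (0:ℝ) 1, ∀ y ∈ Set.Icc (0:ℝ) 1, ∀ z ∈ Set.Icc (0:ℝ) 1,
      y ≤ z → T x y ≤ T x z) ∧
  (∀ x ∈ Set.Icc (0:ℝ) 1, T x 1 = x)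

def IsGPH (T F : ℝ → ℝ → ℝ) : Prop :=
  ∀ lam ∈ Set.Icc (0:ℝ) 1, ∀ x ∈ Set.Icc (0:ℝ) 1, ∀ y ∈ Set.Icc (0:ℝ) 1,
    T (lam * x) (lam * y) = F lam (T x y)

noncomputable def TD : ℝ → ℝ → ℝ := fun x y => if max x y = 1 then min x y else 0

noncomputable def Tss (β : ℝ) : ℝ → ℝ → ℝ := fun x y =>
  if x ∈ Set.Ioc (0:ℝ) 1 ∧ y ∈ Set.Ioc (0:ℝ) 1 then
    (max (x ^ β + y ^ β - 1) 0) ^ (1 / β) else 0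

noncomputable def Fss (β : ℝ) : ℝ → ℝ → ℝ := fun x y =>
  if x ∈ Set.Ioc (0:ℝ) 1 ∧ y ∈ Set.Ioc (0:ℝ) 1 then
    (max (x ^ β + (x * y) ^ β - 1) 0) ^ (1 / β) else 0

theorem schweizer_sklar_pos_general_pseudo_homogeneous (β : ℝ) (hβ : 0 < β) :
    IsGPH (Tss β) (Fss β) := by
  have hβinv : (1/β) ≠ 0 := by positivity
  intro lam hlam x hx y hy
  obtain ⟨hl0, hl1⟩ := hlam
  obtain ⟨hx0, hx1⟩ := hx
  obtain ⟨hy0, hy1⟩ := hy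
  rcases eq_or_lt_of_le hl0 with hl | hl
  · have h1 : ¬ (lam * x ∈ Set.Ioc (0:ℝ) 1 ∧ lam * y ∈ Set.Ioc (0:ℝ) 1) := by
      rintro ⟨⟨ha, -⟩, -⟩
      rw [← hl, zero_mul] at ha
      exact lt_irrefl 0 ha
    have h2 : ¬ (lam ∈ Set.Ioc (0:ℝ) 1 ∧ Tss β x y ∈ Set.Ioc (0:ℝ) 1) := by
      rintro ⟨⟨ha, -⟩, -⟩
      rw [← hl] at ha
      exact lt_irrefl 0 ha
    show (if _ then _ else _) = (if _ then _ else _)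
    rw [if_neg h1, if_neg h2]
  by_cases hxm : x ∈ Set.Ioc (0:ℝ) 1 ∧ y ∈ Set.Ioc (0:ℝ) 1
  case neg =>
    have hT : Tss β x y = 0 := if_neg hxm
    have hcond : ¬ (lam * x ∈ Set.Ioc (0:ℝ) 1 ∧ lam * y ∈ Set.Ioc (0:ℝ) 1) := by
      rintro ⟨⟨ha, _⟩, ⟨hb, _⟩⟩
      apply hxm
      have hx' : 0 < x := by nlinarith
      have hy' : 0 < y := by nlinarith
      exact ⟨⟨hx', hx1⟩, ⟨hy', hy1⟩⟩
    have h2 : ¬ (lam ∈ Set.Ioc (0:ℝ) 1 ∧ Tss β x y ∈ Set.Ioc (0:ℝ) 1) := by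
      rintro ⟨-, ⟨ha, -⟩⟩
      rw [hT] at ha
      exact lt_irrefl 0 ha
    show (if _ then _ else _) = (if _ then _ else _)
    rw [if_neg hcond, if_neg h2]
  case pos =>
    obtain ⟨⟨hx0', hx1'⟩, ⟨hy0', hy1'⟩⟩ := hxm
    have hlx : lam * x ∈ Set.Ioc (0:ℝ) 1 := ⟨mul_pos hl hx0', by nlinarith⟩
    have hly : lam * y ∈ Set.Ioc (0:ℝ) 1 := ⟨mul_pos hl hy0', by nlinarith⟩
    have hxb1 : x ^ β ≤ 1 := Real.rpow_le_one hx0'.le hx1' hβ.le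
    have hyb1 : y ^ β ≤ 1 := Real.rpow_le_one hy0'.le hy1' hβ.le
    have hlb1 : lam ^ β ≤ 1 := Real.rpow_le_one hl0 hl1 hβ.le
    have hlbp : 0 < lam ^ β := Real.rpow_pos_of_pos hl β
    have hxbp : 0 < x ^ β := Real.rpow_pos_of_pos hx0' β
    have hybp : 0 < y ^ β := Real.rpow_pos_of_pos hy0' β
    have hmul : ∀ a : ℝ, 0 ≤ a → (lam * a) ^ β = lam ^ β * a ^ β :=
      fun a ha => Real.mul_rpow hl0 ha
    set m := max (x ^ β + y ^ β - 1) 0 with hm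
    have hTval : Tss β x y = m ^ (1/β) := by
      simp only [Tss, Set.mem_Ioc]
      rw [if_pos ⟨⟨hx0', hx1'⟩, ⟨hy0', hy1'⟩⟩]
    rcases le_or_gt (x ^ β + y ^ β - 1) 0 with hc | hc
    · have hm0 : m = 0 := max_eq_right hc
      have hT0 : Tss β x y = 0 := by rw [hTval, hm0, Real.zero_rpow hβinv]
      have hLHS0 : max ((lam*x)^β + (lam*y)^β - 1) 0 = 0 := by
        apply max_eq_right
        rw [hmul x hx0'.le, hmul y hy0'.le]
        nlinarith
      have h2 : ¬ (lam ∈ Set.Ioc (0:ℝ) 1 ∧ Tss β x y ∈ Set.Ioc (0:ℝ) 1) := by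
        rintro ⟨-, ⟨ha, -⟩⟩
        rw [hT0] at ha
        exact lt_irrefl 0 ha
      show (if _ then _ else _) = (if _ then _ else _)
      rw [if_pos ⟨hlx, hly⟩, if_neg h2, hLHS0, Real.zero_rpow hβinv]
    · have hm' : m = x ^ β + y ^ β - 1 := max_eq_left hc.le
      have hmpos : 0 < m := hm' ▸ hc
      have hm1 : m ≤ 1 := by rw [hm']; nlinarith
      have hTpos : 0 < Tss β x y := by
        rw [hTval]; exact Real.rpow_pos_of_pos hmpos _
      have hTle1 : Tss β x y ≤ 1 := by
        rw [hTval]; exact Real.rpow_le_one hmpos.le hm1 (by positivity)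
      have htβ : (Tss β x y) ^ β = m := by
        rw [hTval, ← Real.rpow_mul hmpos.le, one_div_mul_cancel hβ.ne', Real.rpow_one]
      show (if _ then _ else _) = (if _ then _ else _)
      rw [if_pos ⟨hlx, hly⟩, if_pos ⟨Set.mem_Ioc.mpr ⟨hl, hl1⟩, Set.mem_Ioc.mpr ⟨hTpos, hTle1⟩⟩]
      rw [hmul x hx0'.le, hmul y hy0'.le, hmul _ hTpos.le, htβ, hm']
      ring_nf
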